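/- Let n ≥ 1 and K ≥ 1, let Σ be an invertible symmetric real n × n matrix, let Δt > 0 be a real number, and let b, b̄, ΔW : Fin K → ℝⁿ be sequences. Let X : Fin (K+1) → ℝⁿ satisfy X_{k+1} = X_k + Δt • Σ.mulVec (b̄ k) + Σ.mulVec (ΔW k) for all k. Define q(v) := ⟪v, ((Σᵀ * Σ)⁻¹).mulVec v⟫. Then ∑_{k=0}^{K-1} [ (1/(2Δt)) · q(X_{k+1} − X_k − Δt • Σ.mulVec (b k)) − (1/(2Δt)) · q(X_{k+1} − X_k) ] = (1/2) · Δt · ∑_{k=0}^{K-1} ‖b k‖² − Δt · ∑_{k=0}^{K-1} ⟪b k, b̄ k⟫ − ∑_{k=0}^{K-1} ⟪b k, ΔW k⟫. -/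
import Mathlib


open Matrix

/-- Discretized cross-entropy identity (Proposition 5): summing the single-step
differences of Gaussian transition log-densities along the discrete trajectory
`X_{k+1} = X_k + Δt S b̄_k + S ΔW_k` yields the discretized Girsanov functional
`½ Δt Σ‖b_k‖² - Δt Σ⟪b_k, b̄_k⟫ - Σ⟪b_k, ΔW_k⟫`, with `q(v) = vᵀ (Sᵀ S)⁻¹ v`
and inner products/squared norms written via the dot product. -/
theorem stmt_11 (n K : ℕ) (hn : 1 ≤ n) (hK : 1 ≤ K) (S : Matrix (Fin n) (Fin n) ℝ)
    (hsym : Sᵀ = S) (hinv : IsUnit S) (Δt : ℝ) (hΔt : 0 < Δt)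
    (b bbar ΔW : Fin K → Fin n → ℝ) (X : Fin (K + 1) → Fin n → ℝ)
    (hX : ∀ k : Fin K,
      X k.succ = X k.castSucc + Δt • S.mulVec (bbar k) + S.mulVec (ΔW k))
    (q : (Fin n → ℝ) → ℝ) (hq : ∀ v, q v = v ⬝ᵥ ((Sᵀ * S)⁻¹.mulVec v)) :
    ∑ k : Fin K, ((1 / (2 * Δt)) * q (X k.succ - X k.castSucc - Δt • S.mulVec (b k))
        - (1 / (2 * Δt)) * q (X k.succ - X k.castSucc))
      = (1 / 2) * Δt * ∑ k : Fin K, (b k ⬝ᵥ b k)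
        - Δt * ∑ k : Fin K, (b k ⬝ᵥ bbar k)
        - ∑ k : Fin K, (b k ⬝ᵥ ΔW k) := by
  have hdet : IsUnit S.det := (Matrix.isUnit_iff_isUnit_det S).mp hinv
  have hq' : ∀ w : Fin n → ℝ, q (S.mulVec w) = w ⬝ᵥ w := by
    intro w
    rw [hq, hsym, Matrix.mulVec_mulVec]
    have h1 : (S * S)⁻¹ * S = S⁻¹ := by
      rw [Matrix.mul_inv_rev, mul_assoc, Matrix.nonsing_inv_mul S hdet, mul_one]
    rw [h1]
    have h2 : S.mulVec w = Matrix.vecMul w S := by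
      nth_rewrite 1 [← hsym]; exact Matrix.mulVec_transpose S w
    rw [h2, Matrix.dotProduct_mulVec, Matrix.vecMul_vecMul,
      Matrix.mul_nonsing_inv S hdet, Matrix.vecMul_one]
  have key : ∀ k : Fin K,
      (1 / (2 * Δt)) * q (X k.succ - X k.castSucc - Δt • S.mulVec (b k))
        - (1 / (2 * Δt)) * q (X k.succ - X k.castSucc)
      = (1 / 2) * Δt * (b k ⬝ᵥ b k) - Δt * (b k ⬝ᵥ bbar k) - (b k ⬝ᵥ ΔW k) := by
    intro k
    have hd : X k.succ - X k.castSucc = S.mulVec (Δt • bbar k + ΔW k) := by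
      rw [hX k, Matrix.mulVec_add, Matrix.mulVec_smul]
      abel
    have hd2 : X k.succ - X k.castSucc - Δt • S.mulVec (b k)
        = S.mulVec (Δt • bbar k + ΔW k - Δt • b k) := by
      rw [hd, Matrix.mulVec_sub, Matrix.mulVec_smul]
    rw [hd2, hd, hq', hq']
    simp only [dotProduct_add, add_dotProduct, dotProduct_sub, sub_dotProduct,
      dotProduct_smul, smul_dotProduct, smul_eq_mul,
      dotProduct_comm (bbar k) (b k), dotProduct_comm (ΔW k) (b k)]
    field_simp
    ring
  rw [Finset.sum_congr rfl (fun k _ => key k)]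
  rw [Finset.sum_sub_distrib, Finset.sum_sub_distrib, ← Finset.mul_sum, ← Finset.mul_sum]
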